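/- Let (Q,w) be a non-degenerate quiver with potential with finite-dimensional Jacobian algebra, k a vertex, and (Q',w') = μ_k(Q,w). If N₁, N₂, …, N_m is a complete forward hom-orthogonal sequence in mod J(Q,w) with N₁ = S_k (the simple at k), then F_k⁺(N₂), …, F_k⁺(N_m), S'_k is a complete forward hom-orthogonal sequence in mod J(Q',w'), where F_k⁺ is the generalized reflection functor. -/

import Mathlib

open CategoryTheory CategoryTheory.Limits

universe v u

variable {C : Type u} [Category.{v} C] [Abelian C]

/-- `f, g` form a short exact sequence `0 ⟶ X₁ ⟶ X₂ ⟶ X₃ ⟶ 0`. -/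
def IsSES {X₁ X₂ X₃ : C} (f : X₁ ⟶ X₂) (g : X₂ ⟶ X₃) : Prop :=
  ∃ w : f ≫ g = 0, (CategoryTheory.ShortComplex.mk f g w).ShortExact

/-- A torsion pair `(T, F)`. -/
structure TorsionPairOn (T F : Set C) : Prop where
  hom_zero : ∀ X ∈ T, ∀ Y ∈ F, ∀ f : X ⟶ Y, f = 0
  mem_torsion : ∀ X : C, (∀ Y ∈ F, ∀ f : X ⟶ Y, f = 0) → X ∈ T
  mem_free : ∀ Y : C, (∀ X ∈ T, ∀ f : X ⟶ Y, f = 0) → Y ∈ F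

def IsoClosed (S : Set C) : Prop := ∀ ⦃X Y : C⦄, (X ≅ Y) → X ∈ S → Y ∈ S

def ExtClosedSet (S : Set C) : Prop :=
  ∀ ⦃X₁ X₂ X₃ : C⦄ (f : X₁ ⟶ X₂) (g : X₂ ⟶ X₃), IsSES f g → X₁ ∈ S → X₃ ∈ S → X₂ ∈ S

def QuotClosed (S : Set C) : Prop :=
  ∀ ⦃X Y : C⦄ (p : X ⟶ Y), Epi p → X ∈ S → Y ∈ S

structure IsTorsionClass (T : Set C) : Prop where
  zero_mem : ∀ X : C, IsZero X → X ∈ T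
  iso_closed : IsoClosed T
  ext_closed : ExtClosedSet T
  quot_closed : QuotClosed T

/-- `T'` covers `T` in the lattice of torsion classes. -/
def CoversTC (T T' : Set C) : Prop :=
  T ⊆ T' ∧ T ≠ T' ∧
    ∀ S : Set C, IsTorsionClass S → T ⊆ S → S ⊆ T' → S = T ∨ S = T'

/-- The extension closure of a class of objects. -/
inductive ExtClosure (S : Set C) : C → Prop
  | of (X : C) (h : X ∈ S) : ExtClosure S X
  | zero (X : C) (h : IsZero X) : ExtClosure S X
  | iso (X Y : C) (e : X ≅ Y) (h : ExtClosure S X) : ExtClosure S Y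
  | ext (X₁ X₂ X₃ : C) (f : X₁ ⟶ X₂) (g : X₂ ⟶ X₃) (hseq : IsSES f g)
      (h₁ : ExtClosure S X₁) (h₃ : ExtClosure S X₃) : ExtClosure S X₂

def IsBrick (X : C) : Prop := ¬ IsZero X ∧ ∀ f : X ⟶ X, f = 0 ∨ IsIso f

def IsIndec (X : C) : Prop :=
  ¬ IsZero X ∧ ∀ (Y Z : C), (X ≅ Y ⊞ Z) → IsZero Y ∨ IsZero Z

structure IsMinimalExtending (T : Set C) (M : C) : Prop where
  proper_quot_mem : ∀ ⦃Y : C⦄ (p : M ⟶ Y), Epi p → ¬ IsIso p → Y ∈ T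
  ext_mem : ∀ ⦃X Tt : C⦄ (f : M ⟶ X) (g : X ⟶ Tt), IsSES f g → Tt ∈ T →
      (¬ ∃ r : X ⟶ M, f ≫ r = 𝟙 M) → X ∈ T
  hom_zero : ∀ ⦃W : C⦄, W ∈ T → ∀ f : W ⟶ M, f = 0

/-- A finite filtration of `X` by subobjects. -/
structure FiltrationOf (X : C) where
  len : ℕ
  obj : Fin (len + 1) → C
  map : ∀ i : Fin len, obj i.castSucc ⟶ obj i.succ
  mono : ∀ i, Mono (map i)
  zero : IsZero (obj 0)
  top : obj (Fin.last len) ≅ X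

noncomputable def FiltrationOf.subquot {X : C} (F : FiltrationOf X) (i : Fin F.len) : C :=
  cokernel (F.map i)

variable {P : Type*} [LinearOrder P]

def Semistable (φ : C → P) (M : C) : Prop :=
  ¬ IsZero M ∧ ∀ ⦃L : C⦄ (f : L ⟶ M), Mono f → ¬ IsZero L → φ L ≤ φ M

def StableObj (φ : C → P) (M : C) : Prop :=
  ¬ IsZero M ∧ ∀ ⦃L : C⦄ (f : L ⟶ M), Mono f → ¬ IsZero L → ¬ IsIso f → φ L < φ M

structure IsStabilityFunction (φ : C → P) : Prop where
  iso_invariant : ∀ ⦃X Y : C⦄, (X ≅ Y) → φ X = φ Y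
  seesaw : ∀ ⦃L M N : C⦄ (f : L ⟶ M) (g : M ⟶ N), IsSES f g →
      ¬ IsZero L → ¬ IsZero M → ¬ IsZero N →
      (φ L = φ M ∧ φ M = φ N) ∨ (φ L < φ M ∧ φ M < φ N) ∨ (φ N < φ M ∧ φ M < φ L)

/-- A complete forward hom-orthogonal sequence of bricks. -/
structure IsCFHO {C : Type u} [Category.{v} C] [Abelian C]
    (m : ℕ) (N : Fin m → C) : Prop where
  brick : ∀ i, IsBrick (N i)
  forward_orth : ∀ i j : Fin m, i < j → ∀ f : N i ⟶ N j, f = 0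
  maximal : ¬ ∃ (B : C) (k : ℕ), k ≤ m ∧ IsBrick B ∧
      (∀ i : Fin m, i.val < k → ∀ f : N i ⟶ B, f = 0) ∧
      (∀ j : Fin m, k ≤ j.val → ∀ f : B ⟶ N j, f = 0)
  generates : ∀ T : Set C, IsTorsionClass T → (∀ i, N i ∈ T) → ∀ X : C, X ∈ T


section RotationAux

lemma isZero_of_epi_zero {X V : C} (q : X ⟶ V) [Epi q] (h : q = 0) : IsZero V := by
  rw [IsZero.iff_id_eq_zero, ← cancel_epi q, h, zero_comp, comp_zero]

lemma IsSES.epi' {X₁ X₂ X₃ : C} {f : X₁ ⟶ X₂} {g : X₂ ⟶ X₃} (h : IsSES f g) : Epi g :=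
  h.choose_spec.epi_g

lemma IsSES.desc {X₁ X₂ X₃ Z : C} {f : X₁ ⟶ X₂} {g : X₂ ⟶ X₃} (h : IsSES f g)
    (u : X₂ ⟶ Z) (hu : f ≫ u = 0) : ∃ v : X₃ ⟶ Z, g ≫ v = u := by
  obtain ⟨w, hw⟩ := h
  haveI := hw.epi_g
  exact hw.exact.desc' u hu

lemma isSES_mk {X₁ X₂ X₃ : C} (f : X₁ ⟶ X₂) (g : X₂ ⟶ X₃) [Mono f] [Epi g]
    (w : f ≫ g = 0) (h : IsLimit (KernelFork.ofι f w)) : IsSES f g :=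
  ⟨w, ShortComplex.ShortExact.mk' ((ShortComplex.mk f g w).exact_of_f_is_kernel h)
      inferInstance inferInstance⟩

lemma isSES_kernel {X V : C} (q : X ⟶ V) [Epi q] : IsSES (kernel.ι q) q :=
  isSES_mk _ _ (kernel.condition q) (kernelIsKernel q)

/-- The key construction: given a subobject `A ≤ Y` and a mono `s : S ⟶ Y/A`,
the preimage `P` of `S` in `Y` is a subobject of `Y` containing `A`, fitting into
short exact sequences `0 ⟶ A ⟶ P ⟶ S ⟶ 0` and `0 ⟶ P ⟶ Y ⟶ (Y/A)/S ⟶ 0`, and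
containing `A` strictly if `S` is nonzero. -/
lemma rot_step {Y S : C} (A : Subobject Y) (s : S ⟶ cokernel A.arrow) [Mono s] :
    ∃ k : (A : C) ⟶ pullback (cokernel.π A.arrow) s,
      k ≫ pullback.fst (cokernel.π A.arrow) s = A.arrow ∧
      IsSES k (pullback.snd (cokernel.π A.arrow) s) ∧
      IsSES (pullback.fst (cokernel.π A.arrow) s)
        (cokernel.π A.arrow ≫ cokernel.π s) ∧
      (¬ IsZero S → A < Subobject.mk (pullback.fst (cokernel.π A.arrow) s)) := by
  set P := pullback (cokernel.π A.arrow) s with hP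
  set p₁ := pullback.fst (cokernel.π A.arrow) s with hp₁
  set p₂ := pullback.snd (cokernel.π A.arrow) s with hp₂
  have hcond : A.arrow ≫ cokernel.π A.arrow = (0 : (A : C) ⟶ S) ≫ s := by
    rw [cokernel.condition, zero_comp]
  set k : (A : C) ⟶ P := pullback.lift A.arrow 0 hcond with hkdef
  have hk1 : k ≫ p₁ = A.arrow := pullback.lift_fst _ _ _
  have hk2 : k ≫ p₂ = 0 := pullback.lift_snd _ _ _
  haveI : Mono k := mono_of_mono_fac hk1
  haveI : Mono p₁ := inferInstance
  haveI : Epi p₂ := inferInstance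
  have hses1 : IsSES k p₂ := by
    refine isSES_mk _ _ hk2 (KernelFork.IsLimit.ofι' k hk2 ?_)
    intro Z t ht
    have h1 : (t ≫ p₁) ≫ cokernel.π A.arrow = 0 := by
      rw [Category.assoc, pullback.condition, ← Category.assoc, ht, zero_comp]
    obtain ⟨l, hl⟩ := KernelFork.IsLimit.lift'
      (Abelian.monoIsKernelOfCokernel _ (cokernelIsCokernel A.arrow)) (t ≫ p₁) h1
    refine ⟨l, ?_⟩
    apply pullback.hom_ext
    · rw [Category.assoc, hk1]; exact hl
    · rw [Category.assoc, hk2, comp_zero, ht]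
  have hw2 : p₁ ≫ cokernel.π A.arrow ≫ cokernel.π s = 0 := by
    rw [← Category.assoc, pullback.condition, Category.assoc, cokernel.condition, comp_zero]
  have hses2 : IsSES p₁ (cokernel.π A.arrow ≫ cokernel.π s) := by
    refine isSES_mk _ _ hw2 (KernelFork.IsLimit.ofι' p₁ hw2 ?_)
    intro Z t ht
    have h1 : (t ≫ cokernel.π A.arrow) ≫ cokernel.π s = 0 := by
      rw [Category.assoc]; exact ht
    obtain ⟨w', hw'⟩ := KernelFork.IsLimit.lift'
      (Abelian.monoIsKernelOfCokernel _ (cokernelIsCokernel s)) (t ≫ cokernel.π A.arrow) h1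
    exact ⟨pullback.lift t w' hw'.symm, pullback.lift_fst _ _ _⟩
  refine ⟨k, hk1, hses1, hses2, ?_⟩
  intro hS
  have hle : A ≤ Subobject.mk p₁ := by
    refine Subobject.le_of_comm (k ≫ (Subobject.underlyingIso p₁).inv) ?_
    rw [Category.assoc, Subobject.underlyingIso_arrow, hk1]
  refine lt_of_le_of_ne hle (fun he => hS ?_)
  have he' : Subobject.mk p₁ = Subobject.mk A.arrow := by rw [Subobject.mk_arrow, ← he]
  have hehom : (Subobject.isoOfMkEqMk p₁ A.arrow he').hom ≫ A.arrow = p₁ :=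
    Subobject.ofMkLEMk_comp he'.le
  set eh := (Subobject.isoOfMkEqMk p₁ A.arrow he').hom with heh
  have h1 : k ≫ eh = 𝟙 (A : C) := by
    rw [← cancel_mono A.arrow, Category.assoc, hehom, hk1, Category.id_comp]
  have h2 : eh ≫ k = 𝟙 P := by
    rw [← cancel_mono eh, Category.assoc, h1, Category.comp_id, Category.id_comp]
  haveI : IsIso k := ⟨⟨eh, h1, h2⟩⟩
  have hz : p₂ = 0 := by
    rw [← Category.id_comp p₂, ← IsIso.inv_hom_id k, Category.assoc, hk2, comp_zero]
  exact isZero_of_epi_zero p₂ hz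

/-- Free-ification: every object `W` has a maximal subobject `R` which admits no nonzero
maps to `Sk`-free objects, and the quotient `W/R` is `Sk`-free. -/
lemma rot_freeify (Sk : C) (hsk : Simple Sk) (W : C) [IsNoetherianObject W] :
    ∃ R : Subobject W, (∀ D : C, (∀ f : Sk ⟶ D, f = 0) → ∀ g : (R : C) ⟶ D, g = 0) ∧
      ∀ f : Sk ⟶ cokernel R.arrow, f = 0 := by
  haveI := hsk
  obtain ⟨R, hR, hmax⟩ := (wellFounded_gt (α := Subobject W)).has_min
    {R : Subobject W | ∀ D : C, (∀ f : Sk ⟶ D, f = 0) → ∀ g : (R : C) ⟶ D, g = 0}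
    ⟨⊥, fun D _ g => (IsZero.of_iso (isZero_zero C) Subobject.botCoeIsoZero).eq_of_src g 0⟩
  refine ⟨R, hR, fun f => ?_⟩
  by_contra hf
  haveI : Mono f := mono_of_nonzero_from_simple hf
  obtain ⟨k, hk, hses1, _, hlt⟩ := rot_step R f
  have hmem : Subobject.mk (pullback.fst (cokernel.π R.arrow) f) ∈
      {R : Subobject W | ∀ D : C, (∀ f : Sk ⟶ D, f = 0) → ∀ g : (R : C) ⟶ D, g = 0} := by
    intro D hD g
    have hPall : ∀ h : pullback (cokernel.π R.arrow) f ⟶ D, h = 0 := by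
      intro h
      have h0 : k ≫ h = 0 := hR D hD (k ≫ h)
      obtain ⟨v, hv⟩ := hses1.desc h h0
      rw [← hv, hD v, comp_zero]
    have hg : (Subobject.underlyingIso (pullback.fst (cokernel.π R.arrow) f)).inv ≫ g = 0 :=
      hPall _
    calc g = (Subobject.underlyingIso (pullback.fst (cokernel.π R.arrow) f)).hom ≫
        (Subobject.underlyingIso (pullback.fst (cokernel.π R.arrow) f)).inv ≫ g := by simp
    _ = 0 := by rw [hg, comp_zero]
  exact hmax _ hmem (hlt (Simple.not_isZero Sk))

end RotationAux

/-- Rotation Lemma: let `C = mod J(Q,w)` and `C' = mod J(Q',w')`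
for a mutation `(Q',w') = μₖ(Q,w)` of a non-degenerate quiver with potential with
finite-dimensional Jacobian algebra; these are abelian length categories with
simples `Sₖ ∈ C`, `S'ₖ ∈ C'`, and the generalized reflection functor
`Fₖ⁺ : C ⥤ C'` restricts to an exact equivalence `Sₖ^⊥ ≃ ^⊥S'ₖ`
(Buan–Iyama–Reiten–Smith, Mozgovoy); these properties are taken as hypotheses.
If `N 0, …, N (m-1)` is a CFHO sequence in `C` with `N 0 = Sₖ`, then
`Fₖ⁺(N 1), …, Fₖ⁺(N (m-1)), S'ₖ` is a CFHO sequence in `C'`. -/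
theorem rotation_lemma
    {C : Type u} [Category.{v} C] [Abelian C]
    [∀ X : C, IsNoetherianObject X] [∀ X : C, IsArtinianObject X]
    {C' : Type u'} [Category.{v'} C'] [Abelian C']
    [∀ X : C', IsNoetherianObject X] [∀ X : C', IsArtinianObject X]
    (Sk : C) (hSk : Simple Sk) (Sk' : C') (hSk' : Simple Sk')
    (F : C ⥤ C') [F.Additive]
    -- `F` sends `Sₖ^⊥` into `^⊥S'ₖ`:
    (hperp : ∀ X : C, (∀ f : Sk ⟶ X, f = 0) → ∀ g : F.obj X ⟶ Sk', g = 0)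
    -- `F` is fully faithful on `Sₖ^⊥`:
    (hff : ∀ X Y : C, (∀ f : Sk ⟶ X, f = 0) → (∀ f : Sk ⟶ Y, f = 0) →
        Function.Bijective (fun f : X ⟶ Y => F.map f))
    -- every object of `^⊥S'ₖ` comes from `Sₖ^⊥`:
    (hess : ∀ Y : C', (∀ g : Y ⟶ Sk', g = 0) →
        ∃ X : C, (∀ f : Sk ⟶ X, f = 0) ∧ Nonempty (F.obj X ≅ Y))
    -- `F` preserves short exact sequences with terms in `Sₖ^⊥`:
    (hexact : ∀ ⦃X₁ X₂ X₃ : C⦄ (f : X₁ ⟶ X₂) (g : X₂ ⟶ X₃),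
        (∀ f' : Sk ⟶ X₁, f' = 0) → (∀ f' : Sk ⟶ X₂, f' = 0) →
        (∀ f' : Sk ⟶ X₃, f' = 0) → IsSES f g → IsSES (F.map f) (F.map g))
    (m : ℕ) (hm : 0 < m) (N : Fin m → C) (hN : IsCFHO m N)
    (hN0 : N ⟨0, hm⟩ = Sk) :
    IsCFHO m (fun i : Fin m =>
      if h : (i : ℕ) + 1 < m then F.obj (N ⟨(i : ℕ) + 1, h⟩) else Sk') := by
  classical
  haveI := hSk
  haveI := hSk'
  set N' : Fin m → C' := fun i : Fin m =>
    if h : (i : ℕ) + 1 < m then F.obj (N ⟨(i : ℕ) + 1, h⟩) else Sk' with hN'def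
  have hN'pos : ∀ (i : Fin m) (h : (i : ℕ) + 1 < m), N' i = F.obj (N ⟨(i : ℕ) + 1, h⟩) := by
    intro i h
    simp only [hN'def]
    exact dif_pos h
  have hN'last : ∀ i : Fin m, ¬ ((i : ℕ) + 1 < m) → N' i = Sk' := by
    intro i h
    simp only [hN'def]
    exact dif_neg h
  -- basic facts about Sk-free objects and F
  have hFFsub : ∀ {W X : C} (i : W ⟶ X), Mono i → (∀ f : Sk ⟶ X, f = 0) →
      ∀ f : Sk ⟶ W, f = 0 := by
    intro W X i hi hX f
    haveI := hi
    apply (cancel_mono i).mp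
    rw [hX (f ≫ i), zero_comp]
  have hFFN : ∀ i : Fin m, 0 < (i : ℕ) → ∀ f : Sk ⟶ N i, f = 0 := by
    intro i hi
    rw [← hN0]
    exact fun f => hN.forward_orth ⟨0, hm⟩ i hi f
  have hF0 : ∀ X : C, IsZero X → IsZero (F.obj X) := by
    intro X hX
    rw [IsZero.iff_id_eq_zero]
    have h1 : (𝟙 X : X ⟶ X) = 0 := (IsZero.iff_id_eq_zero _).mp hX
    rw [← F.map_id, h1, F.map_zero]
  have hinj : ∀ (X Y : C), (∀ f : Sk ⟶ X, f = 0) → (∀ f : Sk ⟶ Y, f = 0) →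
      ∀ f : X ⟶ Y, F.map f = 0 → f = 0 := by
    intro X Y hX hY f hf
    apply (hff X Y hX hY).injective
    show F.map f = F.map 0
    rw [hf, F.map_zero]
  have hFnz : ∀ X : C, (∀ f : Sk ⟶ X, f = 0) → ¬ IsZero X → ¬ IsZero (F.obj X) := by
    intro X hX hnz hz
    apply hnz
    rw [IsZero.iff_id_eq_zero]
    apply (hff X X hX hX).injective
    show F.map (𝟙 X) = F.map 0
    rw [F.map_id, F.map_zero]
    exact (IsZero.iff_id_eq_zero _).mp hz
  have hreflIso : ∀ (X Y : C), (∀ f : Sk ⟶ X, f = 0) → (∀ f : Sk ⟶ Y, f = 0) →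
      ∀ f : X ⟶ Y, IsIso (F.map f) → IsIso f := by
    intro X Y hX hY f hf
    haveI := hf
    obtain ⟨g, hg⟩ := (hff Y X hY hX).surjective (inv (F.map f))
    have hg' : F.map g = inv (F.map f) := hg
    refine ⟨⟨g, ?_, ?_⟩⟩
    · apply (hff X X hX hX).injective
      show F.map (f ≫ g) = F.map (𝟙 X)
      rw [F.map_comp, F.map_id, hg', IsIso.hom_inv_id]
    · apply (hff Y Y hY hY).injective
      show F.map (g ≫ f) = F.map (𝟙 Y)
      rw [F.map_comp, F.map_id, hg', IsIso.inv_hom_id]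
  -- F reflects epis with "Sk-filtered cokernel"
  have hFepi : ∀ (A B : C) (ι : A ⟶ B), (∀ f : Sk ⟶ A, f = 0) → (∀ f : Sk ⟶ B, f = 0) →
      (∀ (D : C) (h : B ⟶ D), (∀ f : Sk ⟶ D, f = 0) → ι ≫ h = 0 → h = 0) →
      Epi (F.map ι) := by
    intro A B ι hA hB hcoker
    apply Abelian.epi_of_cokernel_π_eq_zero
    have hperpCc : ∀ g : cokernel (F.map ι) ⟶ Sk', g = 0 := by
      intro g
      have h0 := hperp B hB (cokernel.π (F.map ι) ≫ g)
      rw [← cancel_epi (cokernel.π (F.map ι)), comp_zero]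
      exact h0
    obtain ⟨D, hD, ⟨e⟩⟩ := hess _ hperpCc
    obtain ⟨h, hh⟩ := (hff B D hB hD).surjective (cokernel.π (F.map ι) ≫ e.inv)
    have hh' : F.map h = cokernel.π (F.map ι) ≫ e.inv := hh
    have hzero : ι ≫ h = 0 := by
      apply hinj A D hA hD
      rw [F.map_comp, hh', cokernel.condition_assoc, zero_comp]
    have hmh : F.map h = 0 := by rw [hcoker D h hD hzero, F.map_zero]
    calc cokernel.π (F.map ι) = (cokernel.π (F.map ι) ≫ e.inv) ≫ e.hom := by simp
    _ = 0 := by rw [← hh', hmh, zero_comp]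
  -- F sends Sk-free quotients of objects with F-image in a torsion class into it
  have hFquot : ∀ (T' : Set C'), IsTorsionClass T' → ∀ (Z V : C) (q : Z ⟶ V), Epi q →
      (∀ f : Sk ⟶ Z, f = 0) → (∀ f : Sk ⟶ V, f = 0) → F.obj Z ∈ T' → F.obj V ∈ T' := by
    intro T' hT' Z V q hq hZ hV hZT
    haveI := hq
    have hK : ∀ f : Sk ⟶ kernel q, f = 0 := hFFsub (kernel.ι q) inferInstance hZ
    have hses := hexact (kernel.ι q) q hK hZ hV (isSES_kernel q)
    exact hT'.quot_closed (F.map q) hses.epi' hZT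
  -- THE GENERATION LEMMA
  have gen : ∀ T' : Set C', IsTorsionClass T' → (∀ i, N' i ∈ T') → ∀ Y : C', Y ∈ T' := by
    intro T' hT' hmem
    have hFN : ∀ i : Fin m, 0 < (i : ℕ) → F.obj (N i) ∈ T' := by
      intro i hi
      have h2 : ((i : ℕ) - 1) + 1 < m := by omega
      have hthis := hmem ⟨(i : ℕ) - 1, by omega⟩
      rw [hN'pos _ h2] at hthis
      rwa [show (⟨((i : ℕ) - 1) + 1, h2⟩ : Fin m) = i from
        Fin.ext (show ((i : ℕ) - 1) + 1 = (i : ℕ) by omega)] at hthis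
    have hSk'mem : Sk' ∈ T' := by
      have hthis := hmem ⟨m - 1, by omega⟩
      rwa [hN'last _ (show ¬ (m - 1 + 1 < m) by omega)] at hthis
    -- the torsion class on C pulled from T'
    have hTtc : IsTorsionClass {Z : C | ∀ (V : C) (q : Z ⟶ V), Epi q →
        (∀ f : Sk ⟶ V, f = 0) → F.obj V ∈ T'} := by
      constructor
      · intro X hX V q hq hV
        haveI := hq
        exact hT'.zero_mem _ (hF0 V (isZero_of_epi_zero q (hX.eq_of_src q 0)))
      · intro X Y e hX V q hq hV
        haveI := hq
        exact hX V (e.hom ≫ q) inferInstance hV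
      · -- extension-closedness
        intro X₁ X₂ X₃ f g hseq h₁ h₃ V q hq hV
        haveI := hq
        -- A := image of f ≫ q in V
        set A : Subobject V := Subobject.mk (Abelian.image.ι (f ≫ q)) with hA
        have harr : (Subobject.underlyingIso (Abelian.image.ι (f ≫ q))).inv ≫ A.arrow =
            Abelian.image.ι (f ≫ q) := Subobject.underlyingIso_arrow _
        set e₁ : X₁ ⟶ (A : C) :=
          Abelian.factorThruImage (f ≫ q) ≫
            (Subobject.underlyingIso (Abelian.image.ι (f ≫ q))).inv with he₁
        have he₁arr : e₁ ≫ A.arrow = f ≫ q := by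
          rw [he₁, Category.assoc, harr, Abelian.image.fac]
        haveI : Epi e₁ := epi_comp _ _
        have hAfree : ∀ f' : Sk ⟶ (A : C), f' = 0 := hFFsub A.arrow inferInstance hV
        have hFA : F.obj (A : C) ∈ T' := h₁ _ e₁ inferInstance hAfree
        -- free-ification of the cokernel W of A ↪ V
        obtain ⟨R, hRprop, hRfree⟩ := rot_freeify Sk hSk (cokernel A.arrow)
        obtain ⟨k, hk, hses1, hses2, _⟩ := rot_step A R.arrow
        set p₁ := pullback.fst (cokernel.π A.arrow) R.arrow with hp₁
        have hPfree : ∀ f' : Sk ⟶ pullback (cokernel.π A.arrow) R.arrow, f' = 0 :=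
          hFFsub p₁ inferInstance hV
        have hkepi : Epi (F.map k) := by
          apply hFepi _ _ k hAfree hPfree
          intro D h hD hzero
          obtain ⟨v, hv⟩ := hses1.desc h hzero
          rw [← hv, hRprop D hD v, comp_zero]
        have hFP : F.obj (pullback (cokernel.π A.arrow) R.arrow) ∈ T' :=
          hT'.quot_closed (F.map k) hkepi hFA
        -- cokernel R.arrow is an Sk-free quotient of X₃
        have hcomp0 : f ≫ q ≫ cokernel.π A.arrow ≫ cokernel.π R.arrow = 0 := by
          have h1 : (f ≫ q) ≫ cokernel.π A.arrow = 0 := by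
            rw [← he₁arr, Category.assoc, cokernel.condition, comp_zero]
          calc f ≫ q ≫ cokernel.π A.arrow ≫ cokernel.π R.arrow
              = ((f ≫ q) ≫ cokernel.π A.arrow) ≫ cokernel.π R.arrow := by
                simp only [Category.assoc]
          _ = 0 := by rw [h1, zero_comp]
        obtain ⟨v, hv⟩ := hseq.desc (q ≫ cokernel.π A.arrow ≫ cokernel.π R.arrow) hcomp0
        have hvepi : Epi v := by
          have hgv : Epi (g ≫ v) := by rw [hv]; infer_instance
          exact epi_of_epi g v
        have hFWb : F.obj (cokernel R.arrow) ∈ T' := h₃ _ v hvepi hRfree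
        have hsesF := hexact p₁ (cokernel.π A.arrow ≫ cokernel.π R.arrow)
          hPfree hV hRfree hses2
        exact hT'.ext_closed (F.map p₁) _ hsesF hFP hFWb
      · intro X Y p hp hX V q hq hV
        haveI := hp; haveI := hq
        exact hX V (p ≫ q) inferInstance hV
    have hNmem : ∀ i : Fin m, N i ∈ {Z : C | ∀ (V : C) (q : Z ⟶ V), Epi q →
        (∀ f : Sk ⟶ V, f = 0) → F.obj V ∈ T'} := by
      intro i
      by_cases h0 : (i : ℕ) = 0
      · rw [show N i = Sk from by
          rw [show i = (⟨0, hm⟩ : Fin m) from Fin.ext h0, hN0]]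
        intro V q hq hV
        haveI := hq
        exact hT'.zero_mem _ (hF0 V (isZero_of_epi_zero q (hV q)))
      · have hpos : 0 < (i : ℕ) := Nat.pos_of_ne_zero h0
        intro V q hq hV
        exact hFquot T' hT' (N i) V q hq (hFFN i hpos) hV (hFN i hpos)
    have hTall : ∀ Z : C, ∀ (V : C) (q : Z ⟶ V), Epi q →
        (∀ f : Sk ⟶ V, f = 0) → F.obj V ∈ T' := hN.generates _ hTtc hNmem
    -- every simple object of C' lies in T'
    have hsimple : ∀ S' : C', Simple S' → S' ∈ T' := by
      intro S' hs
      haveI := hs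
      by_cases hz : ∀ g : S' ⟶ Sk', g = 0
      · obtain ⟨X, hX, ⟨e⟩⟩ := hess S' hz
        haveI : Epi (𝟙 X) := inferInstance
        exact hT'.iso_closed e (hTall X X (𝟙 X) inferInstance hX)
      · push_neg at hz
        obtain ⟨g, hg⟩ := hz
        haveI : IsIso g := isIso_of_hom_simple hg
        exact hT'.iso_closed (asIso g).symm hSk'mem
    -- conclude for an arbitrary Y
    intro Y
    obtain ⟨A, hA, hmax⟩ := (wellFounded_gt (α := Subobject Y)).has_min
      {A : Subobject Y | (A : C') ∈ T'}
      ⟨⊥, hT'.iso_closed Subobject.botCoeIsoZero.symm (hT'.zero_mem _ (isZero_zero C'))⟩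
    by_cases htop : A = ⊤
    · rw [htop] at hA
      exact hT'.iso_closed (asIso (Subobject.arrow ⊤)) hA
    · exfalso
      have hQ : ¬ IsZero (cokernel A.arrow) := by
        intro hz
        haveI : Epi A.arrow :=
          Abelian.epi_of_cokernel_π_eq_zero A.arrow (hz.eq_of_tgt (cokernel.π A.arrow) 0)
        haveI : IsIso A.arrow := isIso_of_mono_of_epi _
        exact htop (Subobject.eq_top_of_isIso_arrow A)
      obtain ⟨Sb, hSb⟩ := exists_simple_subobject hQ
      haveI := hSb
      obtain ⟨k, hk, hses1, _, hlt⟩ := rot_step A Sb.arrow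
      have hP : (pullback (cokernel.π A.arrow) Sb.arrow) ∈ T' :=
        hT'.ext_closed k (pullback.snd _ _) hses1 hA (hsimple _ hSb)
      have hmk : Subobject.mk (pullback.fst (cokernel.π A.arrow) Sb.arrow) ∈
          {A : Subobject Y | (A : C') ∈ T'} :=
        hT'.iso_closed (Subobject.underlyingIso _).symm hP
      exact hmax _ hmk (hlt (Simple.not_isZero _))
  -- assemble the CFHO structure
  refine ⟨?_, ?_, ?_, gen⟩
  · -- bricks
    intro i
    by_cases h : (i : ℕ) + 1 < m
    · rw [hN'pos i h]
      have hXFF : ∀ f : Sk ⟶ N ⟨(i : ℕ) + 1, h⟩, f = 0 := hFFN _ (Nat.succ_pos _)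
      obtain ⟨hXnz, hXend⟩ := hN.brick ⟨(i : ℕ) + 1, h⟩
      constructor
      · exact hFnz _ hXFF hXnz
      · intro f
        obtain ⟨f₀, hf₀⟩ := (hff _ _ hXFF hXFF).surjective f
        have hf₀' : F.map f₀ = f := hf₀
        rcases hXend f₀ with h0 | hiso
        · left; rw [← hf₀', h0, F.map_zero]
        · right; rw [← hf₀']; haveI := hiso; infer_instance
    · rw [hN'last i h]
      refine ⟨Simple.not_isZero Sk', fun f => ?_⟩
      by_cases hf : f = 0
      · exact Or.inl hf
      · exact Or.inr (isIso_of_hom_simple hf)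
  · -- forward hom-orthogonality
    intro i j hij
    have hij' : (i : ℕ) < (j : ℕ) := hij
    by_cases hj : (j : ℕ) + 1 < m
    · have hi : (i : ℕ) + 1 < m := by omega
      rw [hN'pos i hi, hN'pos j hj]
      intro f
      obtain ⟨f₀, hf₀⟩ := (hff _ _ (hFFN ⟨(i : ℕ) + 1, hi⟩ (Nat.succ_pos _))
        (hFFN ⟨(j : ℕ) + 1, hj⟩ (Nat.succ_pos _))).surjective f
      have hf₀' : F.map f₀ = f := hf₀
      rw [← hf₀', hN.forward_orth ⟨(i : ℕ) + 1, hi⟩ ⟨(j : ℕ) + 1, hj⟩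
        (Fin.mk_lt_mk.mpr (by omega)) f₀, F.map_zero]
    · have hi : (i : ℕ) + 1 < m := by have := j.isLt; omega
      rw [hN'pos i hi, hN'last j hj]
      exact hperp _ (hFFN ⟨(i : ℕ) + 1, hi⟩ (Nat.succ_pos _))
  · -- maximality
    rintro ⟨B', k', hk'm, hBrick, hleft, hright⟩
    by_cases hklt : k' < m
    · -- pull the inserted brick back to C
      have hperpB' : ∀ g : B' ⟶ Sk', g = 0 := by
        have h := hright ⟨m - 1, by omega⟩ (show k' ≤ m - 1 by omega)
        rwa [hN'last _ (show ¬ (m - 1 + 1 < m) by omega)] at h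
      obtain ⟨B, hBFF, ⟨e⟩⟩ := hess B' hperpB'
      apply hN.maximal
      refine ⟨B, k' + 1, by omega, ?_, ?_, ?_⟩
      · constructor
        · intro hzB
          exact hBrick.1 (IsZero.of_iso (hF0 B hzB) e.symm)
        · intro f
          rcases hBrick.2 (e.inv ≫ F.map f ≫ e.hom) with h0 | hiso
          · left
            apply hinj B B hBFF hBFF
            have hfe : F.map f = e.hom ≫ (e.inv ≫ F.map f ≫ e.hom) ≫ e.inv := by simp
            rw [hfe, h0, zero_comp, comp_zero]
          · right
            apply hreflIso B B hBFF hBFF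
            have hfe : F.map f = e.hom ≫ (e.inv ≫ F.map f ≫ e.hom) ≫ e.inv := by simp
            rw [hfe]
            haveI := hiso
            infer_instance
      · intro i hik
        by_cases h0 : (i : ℕ) = 0
        · rw [show N i = Sk from by
            rw [show i = (⟨0, hm⟩ : Fin m) from Fin.ext h0, hN0]]
          exact hBFF
        · have hpos : 0 < (i : ℕ) := Nat.pos_of_ne_zero h0
          have h2 : ((i : ℕ) - 1) + 1 < m := by have := i.isLt; omega
          have hl := hleft ⟨(i : ℕ) - 1, by omega⟩ (show (i : ℕ) - 1 < k' by omega)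
          rw [hN'pos _ h2, show (⟨((i : ℕ) - 1) + 1, h2⟩ : Fin m) = i from
            Fin.ext (show ((i : ℕ) - 1) + 1 = (i : ℕ) by omega)] at hl
          intro f
          apply hinj _ _ (hFFN i hpos) hBFF
          have h3 := hl (F.map f ≫ e.hom)
          calc F.map f = (F.map f ≫ e.hom) ≫ e.inv := by simp
          _ = 0 := by rw [h3, zero_comp]
      · intro j hjk
        have hpos : 0 < (j : ℕ) := by omega
        have h2 : ((j : ℕ) - 1) + 1 < m := by have := j.isLt; omega
        have hr := hright ⟨(j : ℕ) - 1, by omega⟩ (show k' ≤ (j : ℕ) - 1 by omega)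
        rw [hN'pos _ h2, show (⟨((j : ℕ) - 1) + 1, h2⟩ : Fin m) = j from
          Fin.ext (show ((j : ℕ) - 1) + 1 = (j : ℕ) by omega)] at hr
        intro f
        apply hinj _ _ hBFF (hFFN j hpos)
        have h3 := hr (e.inv ≫ F.map f)
        calc F.map f = e.hom ≫ (e.inv ≫ F.map f) := by simp
        _ = 0 := by rw [h3, comp_zero]
    · -- k' = m: the new brick receives no maps from the generators, so it is zero
      have hall : ∀ (i : Fin m) (f : N' i ⟶ B'), f = 0 := fun i =>
        hleft i (by have := i.isLt; omega)
      have htc : IsTorsionClass {Y : C' | ∀ f : Y ⟶ B', f = 0} := by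
        constructor
        · intro X hX f; exact hX.eq_of_src f 0
        · intro X Y e hX f
          calc f = e.inv ≫ (e.hom ≫ f) := by simp
          _ = 0 := by rw [hX (e.hom ≫ f), comp_zero]
        · intro X₁ X₂ X₃ f g hseq h₁ h₃ u
          obtain ⟨v, hv⟩ := hseq.desc u (h₁ (f ≫ u))
          rw [← hv, h₃ v, comp_zero]
        · intro X Y p hp hX f
          haveI := hp
          rw [← cancel_epi p, hX (p ≫ f), comp_zero]
      have hB' := gen _ htc hall B' (𝟙 B')
      exact hBrick.1 ((IsZero.iff_id_eq_zero _).mpr hB')
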